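/- Let V : H → H be a monotone self-adjoint bounded linear operator with closed range. Then ran V, equipped with the inner product (x,y) ↦ ⟨x, Vy⟩, is a real Hilbert space (i.e., this bilinear form is a complete inner product on ran V). -/

import Mathlib

open RealInnerProductSpace

/-- The range of a monotone self-adjoint bounded linear operator with closed range,
equipped with `(x, y) ↦ ⟪x, V y⟫`, is a real Hilbert space: the form is positive
definite on `ran V` (bilinearity and symmetry being automatic), and `ran V` is
complete with respect to the induced norm. -/
theorem stmt_1 {H : Type*} [NormedAddCommGroup H] [InnerProductSpace ℝ H] [CompleteSpace H]
    (V : H →L[ℝ] H)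
    (hsa : ∀ x y : H, ⟪V x, y⟫ = ⟪x, V y⟫)
    (hmono : ∀ x : H, 0 ≤ ⟪V x, x⟫)
    (hclosed : IsClosed (Set.range V)) :
    (∀ x ∈ Set.range V, ⟪x, V x⟫ = 0 → x = 0) ∧
    (∀ u : ℕ → H, (∀ n, u n ∈ Set.range V) →
      (∀ ε > (0:ℝ), ∃ N, ∀ m ≥ N, ∀ n ≥ N, ⟪u m - u n, V (u m - u n)⟫ < ε) →
      ∃ x ∈ Set.range V, ∀ ε > (0:ℝ), ∃ N, ∀ n ≥ N, ⟪u n - x, V (u n - x)⟫ < ε) := by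
  have hsymm : ∀ x y : H, ⟪x, V y⟫ = ⟪y, V x⟫ := fun x y => by
    rw [← hsa x y, real_inner_comm]
  have hpos : ∀ x : H, 0 ≤ ⟪x, V x⟫ := fun x => by
    rw [← hsa]; exact hmono x
  -- Cauchy-Schwarz for the semidefinite form
  have cs : ∀ x y : H, ⟪x, V y⟫ ^ 2 ≤ ⟪x, V x⟫ * ⟪y, V y⟫ := by
    intro x y
    have key : ∀ t : ℝ, 0 ≤ ⟪y, V y⟫ * (t * t) + (2 * ⟪x, V y⟫) * t + ⟪x, V x⟫ := by
      intro t
      have h0 := hpos (x + t • y)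
      have expand : ⟪x + t • y, V (x + t • y)⟫
          = ⟪y, V y⟫ * (t * t) + (2 * ⟪x, V y⟫) * t + ⟪x, V x⟫ := by
        simp only [map_add, map_smul, inner_add_left, inner_add_right,
          real_inner_smul_left, real_inner_smul_right, hsymm y x]
        ring
      rw [expand] at h0
      exact h0
    have hd := discrim_le_zero key
    rw [discrim] at hd
    nlinarith [hd]
  constructor
  · rintro x ⟨z, rfl⟩ h0
    have h1 := cs (V z) z
    rw [h0, zero_mul] at h1
    have h2 : ⟪V z, V z⟫ ^ 2 = 0 := le_antisymm h1 (sq_nonneg _)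
    have h3 : ⟪V z, V z⟫ = 0 := by
      have := sq_eq_zero_iff.mp h2
      exact this
    exact inner_self_eq_zero.mp h3
  · set K : Submodule ℝ H := LinearMap.range (V : H →ₗ[ℝ] H) with hKdef
    have hKset : (K : Set H) = Set.range V := LinearMap.coe_range _
    have hKclosed : IsClosed (K : Set H) := by rw [hKset]; exact hclosed
    haveI : CompleteSpace K := hKclosed.completeSpace_coe
    set S : K →L[ℝ] K :=
      ContinuousLinearMap.codRestrict (V.comp K.subtypeL) K
        (fun x => LinearMap.mem_range_self _ _) with hSdef
    have hScoe : ∀ x : K, (S x : H) = V (x : H) := fun x => rfl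
    have hinj : LinearMap.ker (S : K →ₗ[ℝ] K) = ⊥ := by
      rw [LinearMap.ker_eq_bot']
      intro m hm
      obtain ⟨z, hz⟩ := LinearMap.mem_range.mp m.2
      have hVm : V (m : H) = 0 := by
        have := congrArg Subtype.val hm
        simpa [hScoe] using this
      have h1 : ⟪(m : H), (m : H)⟫ = 0 := by
        rw [← (show V z = (m : H) from hz), hsa, (show V z = (m : H) from hz), hVm, inner_zero_right]
      have : (m : H) = 0 := inner_self_eq_zero.mp h1
      exact Subtype.ext this
    have hsurj : LinearMap.range (S : K →ₗ[ℝ] K) = ⊤ := by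
      rw [LinearMap.range_eq_top]
      rintro ⟨y, hy⟩
      obtain ⟨z, hz⟩ := LinearMap.mem_range.mp hy
      set p : K := K.orthogonalProjectionOnto z with hpdef
      have hq : z - (p : H) ∈ Kᗮ := Submodule.sub_starProjection_mem_orthogonal (K := K) z
      have hVq : V (z - (p : H)) = 0 := by
        have h1 : ⟪V (z - (p : H)), V (z - (p : H))⟫ = 0 := by
          rw [hsa]
          rw [real_inner_comm]
          exact (Submodule.mem_orthogonal K _).mp hq _ (LinearMap.mem_range_self _ _)
        exact inner_self_eq_zero.mp h1
      refine ⟨p, ?_⟩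
      apply Subtype.ext
      show V (p : H) = y
      have : V z - V (p : H) = V (z - (p : H)) := (map_sub V z (p : H)).symm
      rw [hVq] at this
      have hVp : V (p : H) = V z := (sub_eq_zero.mp this).symm
      rw [hVp]; exact hz
    let e : K ≃L[ℝ] K := ContinuousLinearEquiv.ofBijective S hinj hsurj
    set C : ℝ := ‖(e.symm : K →L[ℝ] K)‖ + 1 with hCdef
    have hC0 : (0:ℝ) < C := by positivity
    have hCbound : ∀ x : K, ‖(x : H)‖ ≤ C * ‖V (x : H)‖ := by
      intro x
      have h1 : x = e.symm (e x) := (e.symm_apply_apply x).symm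
      have h2 : ‖x‖ ≤ ‖(e.symm : K →L[ℝ] K)‖ * ‖e x‖ := by
        conv_lhs => rw [h1]
        exact (e.symm : K →L[ℝ] K).le_opNorm (e x)
      have hex : ‖e x‖ = ‖V (x : H)‖ := by
        have : e x = S x := rfl
        rw [this]
        rfl
      rw [hex] at h2
      have hxn : ‖x‖ = ‖(x : H)‖ := rfl
      rw [hxn] at h2
      nlinarith [norm_nonneg (V (x : H))]
    set M : ℝ := ‖V‖ + 1 with hMdef
    have hM0 : (0:ℝ) < M := by positivity
    have hVnorm : ∀ y : H, ‖V y‖ ≤ M * ‖y‖ := by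
      intro y
      have := V.le_opNorm y
      nlinarith [norm_nonneg y]
    have hup : ∀ y : H, ⟪y, V y⟫ ≤ M * ‖y‖ ^ 2 := by
      intro y
      have h1 := real_inner_le_norm y (V y)
      have h2 := hVnorm y
      nlinarith [norm_nonneg y, norm_nonneg (V y)]
    have hVsq : ∀ y : H, ‖V y‖ ^ 2 ≤ M * ⟪y, V y⟫ := by
      intro y
      rcases eq_or_lt_of_le (norm_nonneg (V y)) with h | h
      · rw [← h]
        have := mul_nonneg hM0.le (hpos y)
        nlinarith
      · have heq : ⟪y, V (V y)⟫ = ‖V y‖ ^ 2 := by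
          rw [← hsa, real_inner_self_eq_norm_sq]
        have h1 := cs y (V y)
        rw [heq] at h1
        have h2 : ⟪V y, V (V y)⟫ ≤ ‖V y‖ * ‖V (V y)‖ := real_inner_le_norm _ _
        have h3 : ‖V (V y)‖ ≤ M * ‖V y‖ := hVnorm (V y)
        have h4 : ⟪V y, V (V y)⟫ ≤ M * ‖V y‖ ^ 2 := by nlinarith [norm_nonneg (V y)]
        have h5 : ⟪y, V y⟫ * ⟪V y, V (V y)⟫ ≤ ⟪y, V y⟫ * (M * ‖V y‖ ^ 2) :=
          mul_le_mul_of_nonneg_left h4 (hpos y)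
        nlinarith [mul_pos h h, h1, h5]
    set D : ℝ := C ^ 2 * M with hDdef
    have hD0 : (0:ℝ) < D := by positivity
    have hlow : ∀ x : H, x ∈ K → ‖x‖ ^ 2 ≤ D * ⟪x, V x⟫ := by
      intro x hx
      have h1 := hCbound ⟨x, hx⟩
      simp only at h1
      have h2 := hVsq x
      nlinarith [norm_nonneg x, norm_nonneg (V x), hpos x, sq_nonneg C]
    intro u hu hcauchy
    have humem : ∀ n, u n ∈ K := fun n => by
      obtain ⟨z, hz⟩ := hu n; exact ⟨z, hz⟩
    have hcs : CauchySeq u := by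
      rw [Metric.cauchySeq_iff]
      intro ε hε
      have hpos' : (0:ℝ) < ε ^ 2 / D := by positivity
      obtain ⟨N, hN⟩ := hcauchy _ hpos'
      refine ⟨N, fun m hm n hn => ?_⟩
      have hmem : u m - u n ∈ K := K.sub_mem (humem m) (humem n)
      have h1 := hlow _ hmem
      have h2 := hN m hm n hn
      rw [dist_eq_norm]
      have h3 : ‖u m - u n‖ ^ 2 < ε ^ 2 := by
        calc ‖u m - u n‖ ^ 2 ≤ D * ⟪u m - u n, V (u m - u n)⟫ := h1
          _ < D * (ε ^ 2 / D) := mul_lt_mul_of_pos_left h2 hD0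
          _ = ε ^ 2 := by field_simp
      exact lt_of_pow_lt_pow_left₀ 2 hε.le h3
    obtain ⟨x, hx⟩ := cauchySeq_tendsto_of_complete hcs
    have hxK : x ∈ K := hKclosed.mem_of_tendsto hx (Filter.Eventually.of_forall humem)
    obtain ⟨z, hz⟩ := LinearMap.mem_range.mp hxK
    refine ⟨x, ⟨z, hz⟩, ?_⟩
    have hsub : Filter.Tendsto (fun n => u n - x) Filter.atTop (nhds 0) := by
      simpa using hx.sub (tendsto_const_nhds (x := x))
    have hVsub : Filter.Tendsto (fun n => V (u n - x)) Filter.atTop (nhds 0) := by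
      have := (V.continuous.tendsto 0).comp hsub
      simpa [Function.comp_def, map_zero] using this
    have hcont : Filter.Tendsto (fun n => ⟪u n - x, V (u n - x)⟫) Filter.atTop (nhds 0) := by
      simpa using hsub.inner (𝕜 := ℝ) hVsub
    intro ε hε
    have hev : ∀ᶠ n in Filter.atTop, ⟪u n - x, V (u n - x)⟫ < ε :=
      hcont.eventually_lt_const hε
    obtain ⟨N, hN⟩ := Filter.eventually_atTop.mp hev
    exact ⟨N, hN⟩
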